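/- There is a constant c > 0 such that for every integer d ≥ 2, letting n = 2^d + d and letting f : {0,1}^n → {0,1} be the address function on n variables, under unit costs and the uniform distribution OPT_N(f) ≥ c · (n / log₂ n) · OPT_A(f). -/

import Mathlib

open Finset

/-- The set of tested indices `T` determines `f` on input `x`:
every input agreeing with `x` on `T` gives the same function value. -/
def Determines (n : ℕ) (f : (Fin n → Bool) → Bool) (T : Finset (Fin n))
    (x : Fin n → Bool) : Prop :=
  ∀ x' : Fin n → Bool, (∀ i ∈ T, x' i = x i) → f x' = f x

/-- The set of indices tested by the non-adaptive strategy `π` in its first `k` tests. -/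
def prefixSet (n : ℕ) (π : Equiv.Perm (Fin n)) (k : ℕ) : Finset (Fin n) :=
  Finset.univ.filter (fun i => (π.symm i).val < k)

/-- The number of tests performed by the non-adaptive strategy `π` on input `x`:
the least `k` such that the first `k` tested indices determine `f` on `x`. -/
noncomputable def naSteps (n : ℕ) (f : (Fin n → Bool) → Bool)
    (π : Equiv.Perm (Fin n)) (x : Fin n → Bool) : ℕ :=
  sInf {k : ℕ | Determines n f (prefixSet n π k) x}

/-- The cost incurred by the non-adaptive strategy `π` on input `x`, with cost vector `c`. -/
noncomputable def naCost (n : ℕ) (f : (Fin n → Bool) → Bool) (c : Fin n → ℝ)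
    (π : Equiv.Perm (Fin n)) (x : Fin n → Bool) : ℝ :=
  ∑ i ∈ prefixSet n π (naSteps n f π x), c i

/-- Probability of the outcome `x` under the product distribution with parameters `p`. -/
def prodWeight (n : ℕ) (p : Fin n → ℝ) (x : Fin n → Bool) : ℝ :=
  ∏ i : Fin n, if x i then p i else 1 - p i

/-- Expected cost of the non-adaptive strategy `π`. -/
noncomputable def naExpCost (n : ℕ) (f : (Fin n → Bool) → Bool) (c : Fin n → ℝ)
    (p : Fin n → ℝ) (π : Equiv.Perm (Fin n)) : ℝ :=
  ∑ x : Fin n → Bool, prodWeight n p x * naCost n f c π x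

/-- Optimal expected cost among non-adaptive strategies. -/
noncomputable def OPTN (n : ℕ) (f : (Fin n → Bool) → Bool) (c : Fin n → ℝ)
    (p : Fin n → ℝ) : ℝ :=
  sInf { r : ℝ | ∃ π : Equiv.Perm (Fin n), r = naExpCost n f c p π }

/-- Binary decision trees over `n` variables (adaptive strategies). -/
inductive DecTree (n : ℕ) : Type
  | leaf : Bool → DecTree n
  | node : Fin n → DecTree n → DecTree n → DecTree n

/-- Evaluation of a decision tree on an input. -/
def DecTree.eval {n : ℕ} : DecTree n → (Fin n → Bool) → Bool
  | .leaf b, _ => b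
  | .node i t0 t1, x => if x i then DecTree.eval t1 x else DecTree.eval t0 x

/-- Cost of a decision tree on input `x`: the sum of the costs of the indices
labeling the internal nodes on the root-to-leaf path followed on `x`. -/
def DecTree.costOn {n : ℕ} (c : Fin n → ℝ) : DecTree n → (Fin n → Bool) → ℝ
  | .leaf _, _ => 0
  | .node i t0 t1, x =>
      c i + (if x i then DecTree.costOn c t1 x else DecTree.costOn c t0 x)

/-- The decision tree `t` computes the function `f`. -/
def DecTree.Computes {n : ℕ} (t : DecTree n) (f : (Fin n → Bool) → Bool) : Prop :=
  ∀ x, t.eval x = f x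

/-- Expected cost of an adaptive strategy (decision tree). -/
noncomputable def adExpCost (n : ℕ) (c : Fin n → ℝ) (p : Fin n → ℝ)
    (t : DecTree n) : ℝ :=
  ∑ x : Fin n → Bool, prodWeight n p x * DecTree.costOn c t x

/-- Optimal expected cost among adaptive strategies computing `f`. -/
noncomputable def OPTA (n : ℕ) (f : (Fin n → Bool) → Bool) (c : Fin n → ℝ)
    (p : Fin n → ℝ) : ℝ :=
  sInf { r : ℝ | ∃ t : DecTree n, DecTree.Computes t f ∧ r = adExpCost n c p t }

/-- `f` is the monotone read-once DNF whose terms are the (nonempty, pairwise disjoint)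
sets of variables `T 0, …, T (m-1)`. -/
def IsReadOnceDNF (n m : ℕ) (T : Fin m → Finset (Fin n))
    (f : (Fin n → Bool) → Bool) : Prop :=
  (∀ j, (T j).Nonempty) ∧
  (∀ j k, j ≠ k → Disjoint (T j) (T k)) ∧
  (∀ x, f x = true ↔ ∃ j, ∀ i ∈ T j, x i = true)

/-- The value of variable `j` of `x : Fin (2^d + d) → Bool` (false for out-of-range `j`).
Variables `0, …, d-1` are the address bits and variables `d, …, d + 2^d - 1` are the
dedicated bits. -/
def xAt (d : ℕ) (x : Fin (2 ^ d + d) → Bool) (j : ℕ) : Bool :=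
  if h : j < 2 ^ d + d then x ⟨j, h⟩ else false

/-- The address encoded in binary by the `d` address bits of `x`. -/
def addrVal (d : ℕ) (x : Fin (2 ^ d + d) → Bool) : ℕ :=
  ∑ j ∈ Finset.range d, if xAt d x j then 2 ^ j else 0

/-- The address function on `n = 2^d + d` variables: it returns the dedicated bit
indexed by the address encoded by the `d` address bits. -/
def addressFn (d : ℕ) (x : Fin (2 ^ d + d) → Bool) : Bool :=
  xAt d x (d + addrVal d x)

/-! ### auxiliary lemmas -/

lemma sum_card_le' (s : Finset ℕ) : ∑ k ∈ range s.card, k ≤ ∑ i ∈ s, i := by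
  induction s using Finset.strongInduction with
  | _ s ih =>
    rcases s.eq_empty_or_nonempty with rfl | hne
    · simp
    · set M := s.max' hne with hM
      have hMs : M ∈ s := s.max'_mem hne
      have hcard : s.card ≤ M + 1 := by
        have hsub : s ⊆ range (M + 1) := by
          intro i hi
          simp only [mem_range]
          exact Nat.lt_succ_of_le (s.le_max' i hi)
        simpa using Finset.card_le_card hsub
      have herase := ih (s.erase M) (Finset.erase_ssubset hMs)
      have hcard' : (s.erase M).card = s.card - 1 := Finset.card_erase_of_mem hMs
      have hsum : ∑ i ∈ s, i = M + ∑ i ∈ s.erase M, i := (Finset.add_sum_erase s id hMs).symm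
      have h1 : 1 ≤ s.card := Finset.card_pos.mpr hne
      have hr : range s.card = insert (s.card - 1) (range (s.card - 1)) := by
        have hc : s.card = (s.card - 1) + 1 := by omega
        nth_rewrite 1 [hc]
        rw [Finset.range_add_one]
      rw [hr, Finset.sum_insert (by simp)]
      rw [hcard'] at herase
      omega

lemma card_filter_lt' (n k : ℕ) : (univ.filter fun j : Fin n => (j : ℕ) < k).card = min k n := by
  rw [Finset.card_filter]
  rw [Fin.sum_univ_eq_sum_range (fun j => if j < k then 1 else 0)]
  rw [← Finset.sum_filter]
  have : filter (fun j => j < k) (range n) = range (min k n) := by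
    ext j; simp [mem_range]; omega
  rw [this]
  simp

lemma sum_two_pow_add_one (d : ℕ) : ∑ j ∈ range d, 2 ^ j + 1 = 2 ^ d := by
  induction d with
  | zero => simp
  | succ d ih =>
    rw [Finset.sum_range_succ]
    have := pow_succ 2 d
    omega

lemma addrVal_lt (d : ℕ) (x : Fin (2 ^ d + d) → Bool) : addrVal d x < 2 ^ d := by
  have h1 : addrVal d x ≤ ∑ j ∈ range d, 2 ^ j :=
    Finset.sum_le_sum (fun j _ => by split <;> simp)
  have h2 := sum_two_pow_add_one d
  omega

lemma card_prefixSet (n : ℕ) (π : Equiv.Perm (Fin n)) (k : ℕ) :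
    (prefixSet n π k).card = min k n := by
  have himg : prefixSet n π k = Finset.image π (univ.filter fun j : Fin n => (j : ℕ) < k) := by
    ext i
    simp only [prefixSet, Finset.mem_filter, Finset.mem_image, Finset.mem_univ, true_and]
    constructor
    · intro h; exact ⟨π.symm i, h, by simp⟩
    · rintro ⟨j, hj, rfl⟩; simpa using hj
  rw [himg, Finset.card_image_of_injective _ π.injective, card_filter_lt']

/-! ### the tree -/

def tAux (d : ℕ) : (k : ℕ) → k ≤ d → (a : ℕ) → a < 2 ^ (d - k) → DecTree (2 ^ d + d)
  | 0, _, a, ha => .node ⟨d + a, by simp only [Nat.sub_zero] at ha; omega⟩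
      (.leaf false) (.leaf true)
  | (k+1), hk, a, ha =>
      .node ⟨d - (k+1), by have := Nat.one_le_two_pow (n := d); omega⟩
        (tAux d k (by omega) a (by
          have h1 : 2 ^ (d - (k+1)) ≤ 2 ^ (d - k) := Nat.pow_le_pow_right (by norm_num) (by omega)
          omega))
        (tAux d k (by omega) (a + 2 ^ (d - (k+1))) (by
          have h2 : 2 ^ (d - k) = 2 * 2 ^ (d - (k+1)) := by
            rw [← pow_succ']
            congr 1
            omega
          omega))

lemma tAux_cost (d : ℕ) (c : Fin (2^d+d) → ℝ) (hc : ∀ i, c i = 1) :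
    ∀ (k : ℕ) (hk : k ≤ d) (a : ℕ) (ha : a < 2 ^ (d - k)) (x),
      DecTree.costOn c (tAux d k hk a ha) x = k + 1 := by
  intro k
  induction k with
  | zero => intro hk a ha x; simp [tAux, DecTree.costOn, hc]
  | succ k ih =>
    intro hk a ha x
    simp only [tAux, DecTree.costOn, hc, ih]
    push_cast
    split <;> ring

lemma tAux_eval (d : ℕ) :
    ∀ (k : ℕ) (hk : k ≤ d) (a : ℕ) (ha : a < 2 ^ (d - k)) (x),
      DecTree.eval (tAux d k hk a ha) x =
        xAt d x (d + (a + ∑ j ∈ Finset.Ico (d - k) d, if xAt d x j then 2 ^ j else 0)) := by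
  intro k
  induction k with
  | zero =>
    intro hk a ha x
    have ha' : a < 2 ^ d := by simpa using ha
    have h0 : d + a < 2 ^ d + d := by omega
    simp only [tAux, DecTree.eval]
    rw [show Finset.Ico (d - 0) d = ∅ by simp, Finset.sum_empty]
    rw [xAt, dif_pos (show d + (a + 0) < 2 ^ d + d by omega)]
    simp only [Nat.add_zero]
    split <;> simp_all
  | succ k ih =>
    intro hk a ha x
    have hins : Finset.Ico (d - (k+1)) d = insert (d - (k+1)) (Finset.Ico (d - k) d) := by
      have hdk : d - k = (d - (k+1)).succ := by omega
      rw [hdk, Nat.succ_eq_add_one, Finset.insert_Ico_add_one_left_eq_Ico (by omega)]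
    have hnotmem : d - (k+1) ∉ Finset.Ico (d - k) d := by simp; omega
    rw [hins, Finset.sum_insert hnotmem]
    have hx : x ⟨d - (k+1), by have := Nat.one_le_two_pow (n := d); omega⟩
        = xAt d x (d - (k+1)) := by
      rw [xAt, dif_pos]
    simp only [tAux, DecTree.eval, hx, ih]
    split <;> (congr 1 ; ring)

lemma tAux_computes (d : ℕ) :
    DecTree.Computes (tAux d d le_rfl 0 (by simp)) (addressFn d) := by
  intro x
  rw [tAux_eval, addressFn, addrVal]
  congr 2
  rw [Nat.sub_self, zero_add]
  congr 1
  rw [Finset.range_eq_Ico]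

/-! ### probability facts -/

lemma prodWeight_half (n : ℕ) (x : Fin n → Bool) :
    prodWeight n (fun _ => 1/2) x = (1/2 : ℝ) ^ n := by
  rw [prodWeight]
  rw [Finset.prod_congr rfl (fun i _ => by norm_num : ∀ i ∈ univ, (if x i then (1:ℝ)/2 else 1 - 1/2) = 1/2)]
  simp

lemma card_bool_fun (n : ℕ) : Fintype.card (Fin n → Bool) = 2 ^ n := by
  simp [Fintype.card_fun]

lemma sum_prodWeight_half (n : ℕ) :
    ∑ x : Fin n → Bool, prodWeight n (fun _ => 1/2) x = 1 := by
  simp only [prodWeight_half]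
  rw [Finset.sum_const, Finset.card_univ, card_bool_fun, nsmul_eq_mul]
  push_cast
  rw [← mul_pow]
  norm_num

/-! ### OPTA bounds -/

lemma costOn_nonneg {n : ℕ} (c : Fin n → ℝ) (hc : ∀ i, 0 ≤ c i) (t : DecTree n)
    (x : Fin n → Bool) : 0 ≤ DecTree.costOn c t x := by
  induction t with
  | leaf b => simp [DecTree.costOn]
  | node i t0 t1 ih0 ih1 =>
    rw [DecTree.costOn]
    have : (0:ℝ) ≤ if x i then DecTree.costOn c t1 x else DecTree.costOn c t0 x := by
      split <;> assumption
    have := hc i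
    linarith

lemma adExpCost_nonneg {n : ℕ} (t : DecTree n) :
    0 ≤ adExpCost n (fun _ => 1) (fun _ => 1/2) t := by
  rw [adExpCost]
  apply Finset.sum_nonneg
  intro x _
  apply mul_nonneg
  · rw [prodWeight_half]; positivity
  · exact costOn_nonneg _ (fun _ => zero_le_one) _ _

lemma OPTA_le (d : ℕ) :
    OPTA (2^d+d) (addressFn d) (fun _ => 1) (fun _ => 1/2) ≤ (d : ℝ) + 1 := by
  have hmem : ((d : ℝ) + 1) ∈
      { r : ℝ | ∃ t : DecTree (2^d+d), DecTree.Computes t (addressFn d) ∧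
        r = adExpCost (2^d+d) (fun _ => 1) (fun _ => 1/2) t } := by
    refine ⟨tAux d d le_rfl 0 (by simp), tAux_computes d, ?_⟩
    rw [adExpCost]
    have : ∀ x : Fin (2^d+d) → Bool,
        prodWeight (2^d+d) (fun _ => 1/2) x * DecTree.costOn (fun _ => 1)
          (tAux d d le_rfl 0 (by simp)) x
        = prodWeight (2^d+d) (fun _ => 1/2) x * ((d:ℝ)+1) := by
      intro x
      rw [tAux_cost d _ (fun _ => rfl)]
    rw [Finset.sum_congr rfl (fun x _ => this x), ← Finset.sum_mul, sum_prodWeight_half,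
      one_mul]
  apply csInf_le _ hmem
  exact ⟨0, fun r ⟨t, _, hr⟩ => hr ▸ adExpCost_nonneg t⟩

/-! ### counting: the address is uniform -/

def splitEquiv (d : ℕ) : (Fin (2^d+d) → Bool) ≃ (Fin d → Bool) × (Fin (2^d) → Bool) where
  toFun x := (fun j => x ⟨j.val, by have := j.isLt; have := Nat.one_le_two_pow (n := d); omega⟩,
              fun v => x ⟨d + v.val, by have := v.isLt; omega⟩)
  invFun zy := fun i => if h : (i : ℕ) < d then zy.1 ⟨i, h⟩
    else zy.2 ⟨(i : ℕ) - d, by have := i.isLt; omega⟩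
  left_inv x := by
    funext i
    by_cases h : (i : ℕ) < d
    · simp only [dif_pos h]
    · simp only [dif_neg h]
      exact congrArg x (Fin.ext (by simp; omega))
  right_inv zy := by
    refine Prod.ext ?_ ?_
    · funext j
      simp only [dif_pos j.isLt]
    · funext v
      have h : ¬ (d + v.val < d) := by omega
      simp only [dif_neg h]
      exact congrArg zy.2 (Fin.ext (by simp))
  
def addrEquiv (d : ℕ) : (Fin d → Bool) ≃ Fin (2^d) :=
  (Equiv.arrowCongr (Equiv.refl (Fin d)) finTwoEquiv.symm).trans finFunctionFinEquiv

lemma addrEquiv_val (d : ℕ) (z : Fin d → Bool) :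
    ((addrEquiv d z : Fin (2^d)) : ℕ) = ∑ j : Fin d, if z j then 2 ^ (j : ℕ) else 0 := by
  rw [addrEquiv, Equiv.trans_apply, finFunctionFinEquiv_apply]
  apply Finset.sum_congr rfl
  intro j _
  rcases hb : z j with _ | _ <;>
    simp [Equiv.arrowCongr, hb, finTwoEquiv]

lemma addrVal_splitEquiv (d : ℕ) (z : Fin d → Bool) (y : Fin (2^d) → Bool) :
    addrVal d ((splitEquiv d).symm (z, y)) = ((addrEquiv d z : Fin (2^d)) : ℕ) := by
  rw [addrEquiv_val, addrVal]
  rw [← Fin.sum_univ_eq_sum_range (fun j => if xAt d ((splitEquiv d).symm (z,y)) j then 2 ^ j else 0)]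
  apply Finset.sum_congr rfl
  intro j _
  have hj : (j : ℕ) < 2^d + d := by
    have := j.isLt; have := Nat.one_le_two_pow (n := d); omega
  have : xAt d ((splitEquiv d).symm (z, y)) j = z j := by
    rw [xAt, dif_pos hj]
    show (if h : ((⟨(j:ℕ), hj⟩ : Fin (2^d+d)) : ℕ) < d then z ⟨_, h⟩ else _) = z j
    rw [dif_pos (show ((⟨(j:ℕ), hj⟩ : Fin (2^d+d)) : ℕ) < d from j.isLt)]
  rw [this]

lemma sum_addr (d : ℕ) (H : Fin (2^d) → ℝ) :
    ∑ x : Fin (2^d+d) → Bool, H ⟨addrVal d x, addrVal_lt d x⟩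
      = (2:ℝ)^(2^d) * ∑ v : Fin (2^d), H v := by
  rw [← Equiv.sum_comp (splitEquiv d).symm (fun x => H ⟨addrVal d x, addrVal_lt d x⟩)]
  rw [Fintype.sum_prod_type]
  have hterm : ∀ (z : Fin d → Bool) (y : Fin (2^d) → Bool),
      H ⟨addrVal d ((splitEquiv d).symm (z, y)), addrVal_lt d _⟩ = H (addrEquiv d z) := by
    intro z y
    congr 1
    exact Fin.ext (addrVal_splitEquiv d z y)
  calc ∑ z : Fin d → Bool, ∑ y : Fin (2^d) → Bool,
        H ⟨addrVal d ((splitEquiv d).symm (z, y)), addrVal_lt d _⟩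
      = ∑ z : Fin d → Bool, ∑ _y : Fin (2^d) → Bool, H (addrEquiv d z) := by
        apply Finset.sum_congr rfl; intro z _
        apply Finset.sum_congr rfl; intro y _
        exact hterm z y
    _ = ∑ z : Fin d → Bool, (2:ℝ)^(2^d) * H (addrEquiv d z) := by
        apply Finset.sum_congr rfl; intro z _
        rw [Finset.sum_const, Finset.card_univ, card_bool_fun, nsmul_eq_mul]
        push_cast
        ring
    _ = (2:ℝ)^(2^d) * ∑ z : Fin d → Bool, H (addrEquiv d z) := by rw [Finset.mul_sum]
    _ = (2:ℝ)^(2^d) * ∑ v : Fin (2^d), H v := by rw [Equiv.sum_comp (addrEquiv d) H]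

/-! ### the determination lemma -/

lemma dedicated_lt (d : ℕ) (x : Fin (2^d+d) → Bool) : d + addrVal d x < 2^d + d := by
  have := addrVal_lt d x; omega

lemma mem_of_determines (d : ℕ) (T : Finset (Fin (2^d+d))) (x : Fin (2^d+d) → Bool)
    (h : Determines (2^d+d) (addressFn d) T x) :
    (⟨d + addrVal d x, dedicated_lt d x⟩ : Fin (2^d+d)) ∈ T := by
  by_contra hmem
  set idx : Fin (2^d+d) := ⟨d + addrVal d x, dedicated_lt d x⟩ with hidx
  set x' := Function.update x idx (!x idx) with hx'
  have hagree : ∀ i ∈ T, x' i = x i := by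
    intro i hi
    apply Function.update_of_ne
    intro he
    rw [he] at hi
    exact hmem hi
  have heq := h x' hagree
  have haddr : addrVal d x' = addrVal d x := by
    rw [addrVal, addrVal]
    apply Finset.sum_congr rfl
    intro j hj
    have hjd : j < d := Finset.mem_range.mp hj
    have hj2 : j < 2^d + d := by have := Nat.one_le_two_pow (n := d); omega
    have hx : xAt d x' j = xAt d x j := by
      rw [xAt, xAt, dif_pos hj2, dif_pos hj2]
      apply Function.update_of_ne
      intro he
      have : j = d + addrVal d x := by
        have := congrArg Fin.val he
        simpa using this
      omega
    rw [hx]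
  have h1 : addressFn d x' = x' idx := by
    rw [addressFn, haddr, xAt, dif_pos (dedicated_lt d x)]
  have h2 : addressFn d x = x idx := by
    rw [addressFn, xAt, dif_pos (dedicated_lt d x)]
  rw [h1, h2] at heq
  rw [hx', Function.update_self] at heq
  simp at heq

lemma n_mem_detSet (d : ℕ) (f : (Fin (2^d+d) → Bool) → Bool) (π : Equiv.Perm (Fin (2^d+d)))
    (x : Fin (2^d+d) → Bool) :
    (2^d+d) ∈ {k : ℕ | Determines (2^d+d) f (prefixSet (2^d+d) π k) x} := by
  intro x' hx'
  have : x' = x := funext fun i => hx' i (by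
    simp only [prefixSet, Finset.mem_filter, Finset.mem_univ, true_and]
    exact (π.symm i).isLt)
  rw [this]

lemma pos_lt_naSteps (d : ℕ) (π : Equiv.Perm (Fin (2^d+d))) (x : Fin (2^d+d) → Bool) :
    (π.symm ⟨d + addrVal d x, dedicated_lt d x⟩).val
      < naSteps (2^d+d) (addressFn d) π x := by
  have hmem : naSteps (2^d+d) (addressFn d) π x ∈
      {k : ℕ | Determines (2^d+d) (addressFn d) (prefixSet (2^d+d) π k) x} :=
    Nat.sInf_mem ⟨2^d+d, n_mem_detSet d (addressFn d) π x⟩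
  have := mem_of_determines d _ x hmem
  simpa [prefixSet] using this

lemma naCost_eq (d : ℕ) (π : Equiv.Perm (Fin (2^d+d))) (x : Fin (2^d+d) → Bool) :
    naCost (2^d+d) (addressFn d) (fun _ => 1) π x
      = ((min (naSteps (2^d+d) (addressFn d) π x) (2^d+d) : ℕ) : ℝ) := by
  rw [naCost, Finset.sum_const, card_prefixSet, nsmul_eq_mul, mul_one]

/-! ### the expectation lower bound -/

lemma naExpCost_ge (d : ℕ) (π : Equiv.Perm (Fin (2^d+d))) :
    ((2:ℝ)^d + 1) / 2 ≤ naExpCost (2^d+d) (addressFn d) (fun _ => 1) (fun _ => 1/2) π := by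
  set g : Fin (2^d) → ℕ := fun v => (π.symm ⟨d + v.val, by have := v.isLt; omega⟩).val with hg
  set H : Fin (2^d) → ℝ := fun v => (g v : ℝ) + 1 with hH
  -- pointwise bound
  have hpt : ∀ x : Fin (2^d+d) → Bool,
      H ⟨addrVal d x, addrVal_lt d x⟩ ≤ naCost (2^d+d) (addressFn d) (fun _ => 1) π x := by
    intro x
    rw [naCost_eq]
    have h1 := pos_lt_naSteps d π x
    have h2 : g ⟨addrVal d x, addrVal_lt d x⟩
        = (π.symm ⟨d + addrVal d x, dedicated_lt d x⟩).val := rfl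
    have h3 : (π.symm ⟨d + addrVal d x, dedicated_lt d x⟩).val < 2^d+d :=
      (π.symm _).isLt
    rw [hH]
    have : g ⟨addrVal d x, addrVal_lt d x⟩ + 1
        ≤ min (naSteps (2^d+d) (addressFn d) π x) (2^d+d) := by
      rw [h2]; omega
    calc (g ⟨addrVal d x, addrVal_lt d x⟩ : ℝ) + 1
        = ((g ⟨addrVal d x, addrVal_lt d x⟩ + 1 : ℕ) : ℝ) := by push_cast; ring
      _ ≤ _ := Nat.cast_le.mpr this
  -- sum of g over all addresses
  have hginj : Function.Injective g := by
    intro v w hvw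
    have := π.symm.injective (Fin.ext hvw : π.symm _ = π.symm _)
    have := congrArg Fin.val this
    simp at this
    exact Fin.ext this
  have hsumg : 2^d * (2^d - 1) ≤ 2 * ∑ v : Fin (2^d), g v := by
    have himg := sum_card_le' (Finset.image g Finset.univ)
    rw [Finset.card_image_of_injective _ hginj, Finset.card_univ, Fintype.card_fin] at himg
    rw [Finset.sum_image (fun a _ b _ h => hginj h)] at himg
    have := Finset.sum_range_id_mul_two (2^d)
    omega
  -- assemble
  have hsumH : ((2:ℝ)^d * ((2:ℝ)^d + 1)) / 2 ≤ ∑ v : Fin (2^d), H v := by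
    rw [hH]
    rw [Finset.sum_add_distrib, Finset.sum_const, Finset.card_univ, Fintype.card_fin,
      nsmul_eq_mul, mul_one]
    have hcast : ((2^d * (2^d - 1) : ℕ) : ℝ) ≤ ((2 * ∑ v : Fin (2^d), g v : ℕ) : ℝ) :=
      Nat.cast_le.mpr hsumg
    have h1 : (1:ℕ) ≤ 2^d := Nat.one_le_two_pow
    have hm : ((2^d - 1 : ℕ) : ℝ) = (2:ℝ)^d - 1 := by
      push_cast [h1]
      ring
    push_cast [hm] at hcast
    push_cast
    nlinarith [hcast]
  have key : naExpCost (2^d+d) (addressFn d) (fun _ => 1) (fun _ => 1/2) π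
      ≥ (1/2:ℝ)^(2^d+d) * ((2:ℝ)^(2^d) * ∑ v : Fin (2^d), H v) := by
    rw [naExpCost, ← sum_addr d H]
    rw [Finset.mul_sum]
    apply Finset.sum_le_sum
    intro x _
    rw [← prodWeight_half (2^d+d) x]
    have hw : 0 ≤ prodWeight (2^d+d) (fun _ => 1/2) x := by
      rw [prodWeight_half]; positivity
    exact mul_le_mul_of_nonneg_left (hpt x) hw
  have hKm : (1/2:ℝ)^(2^d+d) * ((2:ℝ)^(2^d) * (2:ℝ)^d) = 1 := by
    rw [← pow_add]
    rw [div_pow, one_pow, div_mul_eq_mul_div, one_mul, div_eq_one_iff_eq (by positivity)]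
  calc ((2:ℝ)^d + 1) / 2
      = (1/2:ℝ)^(2^d+d) * ((2:ℝ)^(2^d) * (2:ℝ)^d) * (((2:ℝ)^d + 1) / 2) := by
        rw [hKm, one_mul]
    _ = (1/2:ℝ)^(2^d+d) * ((2:ℝ)^(2^d) * (((2:ℝ)^d * ((2:ℝ)^d + 1)) / 2)) := by ring
    _ ≤ (1/2:ℝ)^(2^d+d) * ((2:ℝ)^(2^d) * ∑ v : Fin (2^d), H v) := by
        apply mul_le_mul_of_nonneg_left _ (by positivity)
        exact mul_le_mul_of_nonneg_left hsumH (by positivity)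
    _ ≤ _ := key

lemma OPTN_ge (d : ℕ) :
    ((2:ℝ)^d + 1) / 2 ≤ OPTN (2^d+d) (addressFn d) (fun _ => 1) (fun _ => 1/2) := by
  apply le_csInf
  · exact ⟨_, ⟨1, rfl⟩⟩
  · rintro r ⟨π, rfl⟩
    exact naExpCost_ge d π


/-- There is a constant `c > 0` such that for every `d ≥ 2`, with `n = 2^d + d` and `f`
the address function on `n` variables, under unit costs and the uniform distribution
`OPT_N(f) ≥ c·(n / log₂ n)·OPT_A(f)`. -/
theorem stmt13 :
    ∃ c : ℝ, 0 < c ∧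
      ∀ d : ℕ, 2 ≤ d →
        c * (((2 ^ d + d : ℕ) : ℝ) / Real.logb 2 ((2 ^ d + d : ℕ) : ℝ)) *
            OPTA (2 ^ d + d) (addressFn d) (fun _ => 1) (fun _ => 1/2) ≤
          OPTN (2 ^ d + d) (addressFn d) (fun _ => 1) (fun _ => 1/2) := by
  refine ⟨1/6, by norm_num, ?_⟩
  intro d hd
  set N : ℝ := ((2 ^ d + d : ℕ) : ℝ) with hNdef
  set L : ℝ := Real.logb 2 N with hLdef
  have hN : N = (2:ℝ)^d + (d:ℝ) := by rw [hNdef]; push_cast; ring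
  have hd2 : (2:ℝ) ≤ (d:ℝ) := by exact_mod_cast hd
  have hP1 : (1:ℝ) ≤ (2:ℝ)^d := one_le_pow₀ (by norm_num)
  have hdP : (d:ℝ) ≤ (2:ℝ)^d := by
    have := (Nat.lt_two_pow_self (n := d)).le
    exact_mod_cast this
  have hDL : (d:ℝ) ≤ L := by
    have h1 : Real.logb 2 ((2:ℝ)^d) = d := by
      rw [Real.logb_pow, Real.logb_self_eq_one (by norm_num)]
      ring
    have h2 : Real.logb 2 ((2:ℝ)^d) ≤ L := by
      rw [hLdef]
      apply Real.logb_le_logb_of_le (by norm_num) (by positivity)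
      rw [hN]
      have h0 : (0:ℝ) ≤ (d:ℝ) := Nat.cast_nonneg d
      linarith
    rw [h1] at h2
    exact h2
  have hL0 : (0:ℝ) < L := lt_of_lt_of_le (by linarith) hDL
  have hNle : N ≤ 2 * (2:ℝ)^d := by rw [hN]; linarith
  have hA := OPTA_le d
  have hOn := OPTN_ge d
  have hfrac : N / L ≤ 2 * (2:ℝ)^d / (d:ℝ) :=
    div_le_div₀ (by positivity) hNle (by linarith) hDL
  have hnn : (0:ℝ) ≤ 1/6 * (N / L) := by
    apply mul_nonneg (by norm_num)
    exact div_nonneg (by rw [hN]; positivity) hL0.le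
  have step1 : 1/6 * (N / L) * OPTA (2^d+d) (addressFn d) (fun _ => 1) (fun _ => 1/2)
      ≤ 1/6 * (N / L) * ((d:ℝ) + 1) := mul_le_mul_of_nonneg_left hA hnn
  have step2 : 1/6 * (N / L) * ((d:ℝ) + 1) ≤ 1/6 * (2 * (2:ℝ)^d / (d:ℝ)) * ((d:ℝ) + 1) := by
    apply mul_le_mul_of_nonneg_right _ (by linarith)
    apply mul_le_mul_of_nonneg_left hfrac (by norm_num)
  have step3 : 1/6 * (2 * (2:ℝ)^d / (d:ℝ)) * ((d:ℝ) + 1) ≤ ((2:ℝ)^d + 1) / 2 := by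
    rw [show 1/6 * (2 * (2:ℝ)^d / (d:ℝ)) * ((d:ℝ) + 1)
        = ((2:ℝ)^d * ((d:ℝ) + 1)) / (3 * (d:ℝ)) by field_simp; ring]
    rw [div_le_div_iff₀ (by linarith) (by norm_num)]
    nlinarith [hP1, hd2]
  linarith
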